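/- Let 1 ≤ k ≤ n and let γ, δ ∈ ℕ satisfy γ + s·δ < s·(n − k + 1). Then for every tuple V = (V^(1), …, V^(ℓ)) of GF(q)-subspaces of F^(s+1), the number of message matrices M ∈ F^(s×k) such that the lifted codeword tuple U(M) is (γ, δ)-reachable from V is at most q^(m·k·(s−1)). -/

import Mathlib

namespace Stmt17

/-- `genNorm σ a i = σ^(i-1)(a) ⋯ σ(a) · a`, the generalized power function `N_i(a)`. -/
def genNorm {F : Type} [Field F] (σ : F ≃+* F) (a : F) : ℕ → F
  | 0 => 1
  | i + 1 => (⇑σ)^[i] a * genNorm σ a i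

/-- Generalized operator `D_a^i(b) = σ^i(b) · N_i(a)` for `i ∈ ℕ`. -/
def opev {F : Type} [Field F] (σ : F ≃+* F) (a b : F) (i : ℕ) : F :=
  (⇑σ)^[i] b * genNorm σ a i

/-- `b` is σ-conjugate to `a`, i.e. `b = σ(c)·a·c⁻¹` for some nonzero `c`. -/
def SConj {F : Type} [Field F] (σ : F ≃+* F) (a b : F) : Prop :=
  ∃ c : F, c ≠ 0 ∧ b = σ c * a * c⁻¹

/-- σ-generalized Moore matrix `λ_d(x)_a⃗` w.r.t. the length partition `nn`:
its row `r` applies `D_{a_i}^r` entrywise to the `i`-th block of `x`. -/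
def moore {F : Type} [Field F] (σ : F ≃+* F) {ℓ : ℕ} (nn : Fin ℓ → ℕ) (aa : Fin ℓ → F)
    (d : ℕ) (x : (Σ i : Fin ℓ, Fin (nn i)) → F) :
    Matrix (Fin d) (Σ i : Fin ℓ, Fin (nn i)) F :=
  Matrix.of fun r p => opev σ (aa p.1) (x p) (r : ℕ)

/-- `λ_d(X)_a⃗` for a matrix `X`: the stack of `λ_d(x_j)_a⃗` over the rows of `X`. -/
def mooreMat {F : Type} [Field F] (σ : F ≃+* F) {ℓ : ℕ} (nn : Fin ℓ → ℕ) (aa : Fin ℓ → F)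
    {s : ℕ} (d : ℕ) (X : Matrix (Fin s) (Σ i : Fin ℓ, Fin (nn i)) F) :
    Matrix (Fin s × Fin d) (Σ i : Fin ℓ, Fin (nn i)) F :=
  Matrix.of fun r p => opev σ (aa p.1) (X r.1 p) (r.2 : ℕ)

/-- `rk_q` of a vector: the `K`-dimension of the `K`-span of its entries. -/
noncomputable def rkq (K : Type) [Field K] {F : Type} [Field F] [Algebra K F] {ι : Type}
    (v : ι → F) : ℕ :=
  Module.finrank K (Submodule.span K (Set.range v))

/-- `rk_q` of a matrix: the `K`-dimension of the `K`-span of its columns. -/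
noncomputable def rkqMat (K : Type) [Field K] {F : Type} [Field F] [Algebra K F]
    {s : ℕ} {ι : Type} (X : Matrix (Fin s) ι F) : ℕ :=
  Module.finrank K (Submodule.span K (Set.range fun j : ι => fun r : Fin s => X r j))

/-- Sum-rank weight of a blockwise vector. -/
noncomputable def wtV (K : Type) [Field K] {F : Type} [Field F] [Algebra K F] {ℓ : ℕ}
    (nn : Fin ℓ → ℕ) (x : (Σ i : Fin ℓ, Fin (nn i)) → F) : ℕ :=
  ∑ i, rkq K fun μ : Fin (nn i) => x ⟨i, μ⟩

/-- Sum-rank weight of a blockwise matrix. -/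
noncomputable def wtM (K : Type) [Field K] {F : Type} [Field F] [Algebra K F] {s ℓ : ℕ}
    (nn : Fin ℓ → ℕ) (X : Matrix (Fin s) (Σ i : Fin ℓ, Fin (nn i)) F) : ℕ :=
  ∑ i, rkqMat K (Matrix.of fun (r : Fin s) (μ : Fin (nn i)) => X r ⟨i, μ⟩)

/-- Codeword `C(M) = M · λ_k(β)_a⃗` of the `s`-interleaved linearized Reed–Solomon code. -/
def codeword {F : Type} [Field F] (σ : F ≃+* F) {ℓ : ℕ} (nn : Fin ℓ → ℕ) (aa : Fin ℓ → F)
    (β : (Σ i : Fin ℓ, Fin (nn i)) → F) {s : ℕ} (k : ℕ) (M : Matrix (Fin s) (Fin k) F) :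
    Matrix (Fin s) (Σ i : Fin ℓ, Fin (nn i)) F :=
  M * moore σ nn aa k β

/-- The `i`-th component subspace of the lifted codeword of `M`: the `K`-span in
`F^{s+1}` of the `n_i` vectors `(β^(i)_μ, C(M)^(i)_{1,μ}, …, C(M)^(i)_{s,μ})`. -/
noncomputable def liftSp (K : Type) [Field K] {F : Type} [Field F] [Algebra K F]
    (σ : F ≃+* F) {ℓ : ℕ} (nn : Fin ℓ → ℕ) (aa : Fin ℓ → F)
    (β : (Σ i : Fin ℓ, Fin (nn i)) → F) {s : ℕ} (k : ℕ)
    (M : Matrix (Fin s) (Fin k) F) (i : Fin ℓ) : Submodule K (Fin (s + 1) → F) :=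
  Submodule.span K (Set.range fun μ : Fin (nn i) =>
    Fin.cons (β ⟨i, μ⟩) fun j : Fin s => codeword σ nn aa β k M j ⟨i, μ⟩)

section Aux

variable {K F : Type} [Field K] [Field F] [Algebra K F] (σ : F ≃+* F)

lemma it_add (j : ℕ) (x y : F) : (⇑σ)^[j] (x + y) = (⇑σ)^[j] x + (⇑σ)^[j] y := by
  induction j generalizing x y with
  | zero => rfl
  | succ j ih => simp [Function.iterate_succ_apply', ih]

lemma it_mul (j : ℕ) (x y : F) : (⇑σ)^[j] (x * y) = (⇑σ)^[j] x * (⇑σ)^[j] y := by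
  induction j generalizing x y with
  | zero => rfl
  | succ j ih => simp [Function.iterate_succ_apply', ih]

lemma it_sub (j : ℕ) (x y : F) : (⇑σ)^[j] (x - y) = (⇑σ)^[j] x - (⇑σ)^[j] y := by
  induction j generalizing x y with
  | zero => rfl
  | succ j ih => simp [Function.iterate_succ_apply', ih]

lemma it_one (j : ℕ) : (⇑σ)^[j] (1 : F) = 1 := by
  induction j with
  | zero => rfl
  | succ j ih => rw [Function.iterate_succ_apply, map_one, ih]

lemma it_zero (j : ℕ) : (⇑σ)^[j] (0 : F) = 0 := by
  induction j with
  | zero => rfl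
  | succ j ih => rw [Function.iterate_succ_apply, map_zero, ih]

lemma it_inj (j : ℕ) : Function.Injective ((⇑σ)^[j] : F → F) :=
  Function.Injective.iterate σ.injective j

lemma it_ne_zero (j : ℕ) {x : F} (hx : x ≠ 0) : (⇑σ)^[j] x ≠ 0 := by
  intro h
  exact hx (it_inj σ j (h.trans (it_zero σ j).symm))

lemma it_sum (j : ℕ) {ι : Type*} (s : Finset ι) (f : ι → F) :
    (⇑σ)^[j] (∑ t ∈ s, f t) = ∑ t ∈ s, (⇑σ)^[j] (f t) := by
  classical
  induction s using Finset.induction with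
  | empty => simpa using it_zero σ j
  | insert _ _ hx ih => rw [Finset.sum_insert hx, Finset.sum_insert hx, it_add, ih]

lemma it_fix (hσ : ∀ c : K, σ (algebraMap K F c) = algebraMap K F c) (j : ℕ) (c : K) : (⇑σ)^[j] (algebraMap K F c) = algebraMap K F c := by
  induction j with
  | zero => rfl
  | succ j ih => rw [Function.iterate_succ_apply, hσ, ih]

lemma it_smul (hσ : ∀ c : K, σ (algebraMap K F c) = algebraMap K F c) (j : ℕ) (c : K) (x : F) : (⇑σ)^[j] (c • x) = c • (⇑σ)^[j] x := by
  rw [Algebra.smul_def, it_mul, it_fix σ hσ j, ← Algebra.smul_def]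

lemma genNorm_shift (a : F) (j j' : ℕ) :
    (⇑σ)^[j] (genNorm σ a j') * genNorm σ a j = genNorm σ a (j + j') := by
  induction j' with
  | zero => simp [genNorm, it_one]
  | succ j' ih =>
      show (⇑σ)^[j] ((⇑σ)^[j'] a * genNorm σ a j') * genNorm σ a j = _
      rw [it_mul, mul_assoc, ih, ← Function.iterate_add_apply]
      show (⇑σ)^[j + j'] a * genNorm σ a (j + j') = genNorm σ a (j + (j' + 1))
      rw [← Nat.add_assoc]
      rfl

/-- Plain (non-bundled) evaluation of a coefficient sequence as a σ-operator at
conjugacy-class representative `a`, truncated at degree `< T`. -/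
def Psi (a : F) (q : ℕ → F) (T : ℕ) (b : F) : F :=
  ∑ j ∈ Finset.range T, q j * opev σ a b j

/-- Bundled `K`-linear version of `Psi`. -/
def PsiL (hσ : ∀ c : K, σ (algebraMap K F c) = algebraMap K F c) (a : F) (q : ℕ → F) (T : ℕ) : F →ₗ[K] F where
  toFun b := Psi σ a q T b
  map_add' x y := by
    simp only [Psi, opev, it_add, add_mul, mul_add]
    rw [Finset.sum_add_distrib]
  map_smul' c x := by
    simp only [Psi, opev, it_smul σ hσ _, RingHom.id_apply, smul_mul_assoc, mul_smul_comm]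
    rw [Finset.smul_sum]

@[simp] lemma PsiL_apply (hσ : ∀ c : K, σ (algebraMap K F c) = algebraMap K F c) (a : F) (q : ℕ → F) (T : ℕ) (b : F) :
    PsiL σ hσ a q T b = Psi σ a q T b := rfl

/-- support strictly below `A`. -/
def SuppLT (q : ℕ → F) (A : ℕ) : Prop := ∀ e, A ≤ e → q e = 0

lemma Psi_trunc (a : F) {q : ℕ → F} {A : ℕ} (h : SuppLT q A) {T : ℕ} (hT : A ≤ T) (b : F) :
    Psi σ a q T b = Psi σ a q A b := by
  rw [Psi, Psi, ← Finset.sum_subset (Finset.range_subset_range.mpr hT)]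
  intro x hx hx'
  rw [h x (by simpa using hx'), zero_mul]

lemma Psi_zero_right (a : F) (q : ℕ → F) (T : ℕ) : Psi σ a q T 0 = 0 := by
  simp [Psi, opev, it_zero]

lemma Psi_congr (a : F) {q q' : ℕ → F} {T : ℕ} (h : ∀ j < T, q j = q' j) (b : F) :
    Psi σ a q T b = Psi σ a q' T b := by
  refine Finset.sum_congr rfl fun j hj => ?_
  rw [h j (Finset.mem_range.mp hj)]

lemma Psi_addq (a : F) (q q' : ℕ → F) (T : ℕ) (b : F) :
    Psi σ a (fun e => q e + q' e) T b = Psi σ a q T b + Psi σ a q' T b := by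
  simp [Psi, add_mul, Finset.sum_add_distrib]

/-- the Ore (skew) product of coefficient sequences. -/
def sprod (q p : ℕ → F) : ℕ → F :=
  fun d => ∑ j ∈ Finset.range (d + 1), q j * (⇑σ)^[j] (p (d - j))

lemma sprod_zero_left (p : ℕ → F) : sprod σ (fun _ => (0:F)) p = fun _ => 0 := by
  funext d; simp [sprod]

lemma sprod_zero_right (q : ℕ → F) : sprod σ q (fun _ => (0:F)) = fun _ => 0 := by
  funext d; simp [sprod, it_zero]

lemma sprod_add_left (q q' p : ℕ → F) :
    sprod σ (fun e => q e + q' e) p = fun d => sprod σ q p d + sprod σ q' p d := by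
  funext d; simp [sprod, add_mul, Finset.sum_add_distrib]

lemma sprod_sub_right (q p p' : ℕ → F) :
    sprod σ q (fun e => p e - p' e) = fun d => sprod σ q p d - sprod σ q p' d := by
  funext d; simp [sprod, it_sub, mul_sub, Finset.sum_sub_distrib]

lemma sprod_supp {q p : ℕ → F} {A B : ℕ} (hA : 1 ≤ A) (hq : SuppLT q A) (hp : SuppLT p B) :
    SuppLT (sprod σ q p) (A + B - 1) := by
  intro e he
  rw [sprod]
  refine Finset.sum_eq_zero fun j hj => ?_
  by_cases hjA : A ≤ j
  · rw [hq j hjA, zero_mul]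
  · rw [hp (e - j) (by omega), it_zero, mul_zero]

end Aux

end Stmt17

namespace Stmt17
section C
variable {K F : Type} [Field K] [Field F] [Algebra K F] (σ : F ≃+* F)

lemma tri (t : ℕ → ℕ → F) (T : ℕ) :
    ∑ d ∈ Finset.range T, ∑ j ∈ Finset.range (d + 1), t j (d - j)
      = ∑ j ∈ Finset.range T, ∑ j' ∈ Finset.range (T - j), t j j' := by
  induction T with
  | zero => simp
  | succ T ih =>
      rw [Finset.sum_range_succ, ih]
      have h1 : ∀ j ∈ Finset.range (T+1), ∑ j' ∈ Finset.range (T + 1 - j), t j j'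
          = ∑ j' ∈ Finset.range (T - j), t j j' + t j (T - j) := by
        intro j hj
        have : T + 1 - j = (T - j) + 1 := by
          have := Finset.mem_range.mp hj; omega
        rw [this, Finset.sum_range_succ]
      rw [Finset.sum_congr rfl h1, Finset.sum_add_distrib]
      congr 1
      · rw [Finset.sum_range_succ]
        simp

lemma Psi_comp (a : F) {q p : ℕ → F} {A B : ℕ} (hq : SuppLT q A) (hp : SuppLT p B) (b : F) :
    Psi σ a (sprod σ q p) (A + B) b = Psi σ a q (A + B) (Psi σ a p (A + B) b) := by
  set t : ℕ → ℕ → F := fun j j' =>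
    q j * (⇑σ)^[j] (p j') * ((⇑σ)^[j + j'] b * genNorm σ a (j + j')) with ht
  have e1 : ∀ d, sprod σ q p d * opev σ a b d
      = ∑ j ∈ Finset.range (d + 1), t j (d - j) := by
    intro d
    rw [sprod, Finset.sum_mul]
    refine Finset.sum_congr rfl fun j hj => ?_
    have hjd : j + (d - j) = d := by have := Finset.mem_range.mp hj; omega
    rw [ht]
    simp only [hjd, opev]
  have e2 : ∀ j ∈ Finset.range (A + B), ∑ j' ∈ Finset.range (A + B - j), t j j'
      = ∑ j' ∈ Finset.range (A + B), t j j' := by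
    intro j hj
    by_cases hA : A ≤ j
    · have hz : ∀ j', t j j' = 0 := by
        intro j'; rw [ht]; simp only [hq j hA, zero_mul]
      simp [hz]
    · refine Finset.sum_subset (Finset.range_subset_range.mpr (by omega)) ?_
      intro x hx hx'
      have hxB : B ≤ x := by
        have h1 := Finset.mem_range.mp hx
        have h2 : ¬ x < A + B - j := fun h => hx' (Finset.mem_range.mpr h)
        omega
      rw [ht]; simp only [hp x hxB, it_zero, mul_zero, zero_mul]
  have e3 : ∀ j ∈ Finset.range (A + B), q j * opev σ a (Psi σ a p (A + B) b) j
      = ∑ j' ∈ Finset.range (A + B), t j j' := by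
    intro j _
    rw [Psi, opev, it_sum, Finset.sum_mul, Finset.mul_sum]
    refine Finset.sum_congr rfl fun j' _ => ?_
    rw [opev, it_mul, it_mul, ← Function.iterate_add_apply]
    simp only [ht]
    rw [← genNorm_shift σ a j j']
    ring
  calc Psi σ a (sprod σ q p) (A + B) b
      = ∑ d ∈ Finset.range (A + B), ∑ j ∈ Finset.range (d + 1), t j (d - j) :=
        Finset.sum_congr rfl fun d _ => e1 d
    _ = ∑ j ∈ Finset.range (A + B), ∑ j' ∈ Finset.range (A + B - j), t j j' := tri t (A + B)
    _ = ∑ j ∈ Finset.range (A + B), ∑ j' ∈ Finset.range (A + B), t j j' :=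
        Finset.sum_congr rfl e2
    _ = Psi σ a q (A + B) (Psi σ a p (A + B) b) := (Finset.sum_congr rfl e3).symm

end C

section D
variable {K F : Type} [Field K] [Field F] [Algebra K F] (σ : F ≃+* F)

/-- coefficients of the linear skew polynomial `x - c`. -/
def linp (c : F) : ℕ → F := fun d => if d = 0 then -c else if d = 1 then 1 else 0

lemma linp_supp (c : F) : SuppLT (linp c) 2 := by
  intro e he
  rcases e with _ | e
  · omega
  · rcases e with _ | e
    · omega
    · rfl

lemma Psi_linp (a c b : F) : Psi σ a (linp c) 2 b = σ b * a - c * b := by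
  rw [Psi]
  rw [Finset.sum_range_succ, Finset.sum_range_one]
  simp [linp, opev, genNorm]
  ring

lemma Psi_single (a : F) (r : F) {T : ℕ} (hT : 1 ≤ T) (b : F) :
    Psi σ a (fun d => if d = 0 then r else 0) T b = r * b := by
  have h : SuppLT (fun d => if d = 0 then r else 0) 1 := by
    intro e he
    have : e ≠ 0 := by omega
    simp [this]
  rw [Psi_trunc σ a h hT, Psi, Finset.sum_range_one]
  simp [opev, genNorm]

/-- division with remainder by `x - c`. -/
lemma exists_div (c : F) :
    ∀ (A : ℕ) (f : ℕ → F), SuppLT f (A + 1) →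
      ∃ g r, SuppLT g A ∧ ∀ d, f d = sprod σ g (linp c) d + (if d = 0 then r else 0) := by
  intro A
  induction A with
  | zero =>
      intro f hf
      refine ⟨fun _ => 0, f 0, fun e _ => rfl, fun d => ?_⟩
      rw [sprod_zero_left]
      rcases d with _ | d
      · simp
      · simp [hf (d+1) (by omega)]
  | succ A ih =>
      intro f hf
      set h : ℕ → F := fun d => if d = A then f (A + 1) else 0 with hh
      have hsh : ∀ d, sprod σ h (linp c) d
          = if d = A + 1 then f (A + 1) else if d = A then f (A+1) * (⇑σ)^[A] (-c) else 0 := by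
        intro d
        rw [sprod]
        by_cases hdlt : A < d + 1
        · rw [Finset.sum_eq_single A]
          · by_cases hdA : d = A + 1
            · subst hdA; simp [hh, linp]
            · by_cases hdA2 : d = A
              · subst hdA2; simp [hh, linp]
              · have h1 : d - A ≠ 0 := by omega
                have h2 : d - A ≠ 1 := by omega
                simp [hh, linp, h1, h2, it_zero, hdA, hdA2]
          · intro j hj hjA
            simp [hh, hjA]
          · intro hA
            exact absurd (Finset.mem_range.mpr hdlt) hA
        · have hdA : ¬ d = A + 1 := by omega
          have hdA2 : ¬ d = A := by omega
          rw [if_neg hdA, if_neg hdA2]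
          refine Finset.sum_eq_zero fun j hj => ?_
          have : ¬ j = A := by have := Finset.mem_range.mp hj; omega
          simp [hh, this]
      set f' : ℕ → F := fun d => f d - sprod σ h (linp c) d with hf'
      have hf's : SuppLT f' (A + 1) := by
        intro e he
        rw [hf']
        simp only
        rw [hsh]
        by_cases heA : e = A + 1
        · subst heA; simp
        · rw [hf e (by omega)]
          simp [heA]
          omega
      obtain ⟨g0, r, hg0, hrep⟩ := ih f' hf's
      refine ⟨fun e => g0 e + h e, r, ?_, ?_⟩
      · intro e he
        show g0 e + h e = 0
        rw [hg0 e (by omega), hh]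
        simp
        omega
      · intro d
        have := hrep d
        rw [hf'] at this
        simp only at this
        have h2 : f d = sprod σ g0 (linp c) d + sprod σ h (linp c) d + (if d = 0 then r else 0) := by
          linear_combination this
        rw [h2, congrFun (sprod_add_left σ g0 h (linp c)) d]

/-- top coefficient extraction: a nonzero sequence with bounded support has a maximal
nonzero coefficient. -/
lemma exists_top {q : ℕ → F} {A : ℕ} (hq : SuppLT q A) (hne : q ≠ fun _ => 0) :
    ∃ dq, q dq ≠ 0 ∧ ∀ j, dq < j → q j = 0 := by
  classical
  have hne' : ∃ j, q j ≠ 0 := by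
    by_contra hcon
    push_neg at hcon
    exact hne (funext fun j => hcon j)
  obtain ⟨j0, hj0⟩ := hne'
  set S : Finset ℕ := (Finset.range A).filter (fun j => q j ≠ 0) with hS
  have hj0S : j0 ∈ S := by
    refine Finset.mem_filter.mpr ⟨Finset.mem_range.mpr ?_, hj0⟩
    by_contra hcon
    exact hj0 (hq j0 (by omega))
  refine ⟨S.max' ⟨j0, hj0S⟩, (Finset.mem_filter.mp (S.max'_mem ⟨j0, hj0S⟩)).2, ?_⟩
  intro j hj
  by_contra hcon
  have hjS : j ∈ S := by
    refine Finset.mem_filter.mpr ⟨Finset.mem_range.mpr ?_, hcon⟩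
    by_contra hc2
    exact hcon (hq j (by omega))
  exact absurd (Finset.le_max' S j hjS) (by omega)

/-- no zero divisors for the skew product. -/
lemma sprod_eq_zero {q p : ℕ → F} {A B : ℕ} (hqs : SuppLT q A) (hps : SuppLT p B)
    (hq : q ≠ fun _ => 0) (h : sprod σ q p = fun _ => 0) : p = fun _ => 0 := by
  by_contra hp
  obtain ⟨dq, hdq, hdq'⟩ := exists_top hqs hq
  obtain ⟨dp, hdp, hdp'⟩ := exists_top hps hp
  have h0 : sprod σ q p (dq + dp) = 0 := congrFun h (dq + dp)
  rw [sprod, Finset.sum_eq_single dq] at h0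
  · have : (dq : ℕ) + dp - dq = dp := by omega
    rw [this] at h0
    exact (mul_ne_zero hdq (it_ne_zero σ dq hdp)) h0
  · intro j hj hjdq
    rcases Nat.lt_or_ge j dq with hlt | hge
    · rw [hdp' (dq + dp - j) (by omega), it_zero, mul_zero]
    · rw [hdq' j (by omega), zero_mul]
  · intro hc
    exact absurd (Finset.mem_range.mpr (by omega)) hc

end D


section E
variable {K F : Type} [Field K] [Field F] [Algebra K F] (σ : F ≃+* F)

open Module LinearMap

lemma finrank_ker_comp [FiniteDimensional K F] (φ ψ : F →ₗ[K] F) :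
    finrank K ↥(ker (φ ∘ₗ ψ)) ≤ finrank K ↥(ker φ) + finrank K ↥(ker ψ) := by
  set κ := ker (φ ∘ₗ ψ) with hκ
  set ρ : ↥κ →ₗ[K] F := ψ.comp κ.subtype with hρ
  have h1 : LinearMap.range ρ ≤ ker φ := by
    rintro x ⟨⟨y, hy⟩, rfl⟩
    exact hy
  have h3 : finrank K ↥(ker ρ) ≤ finrank K ↥(ker ψ) := by
    have hinj : Function.Injective κ.subtype := κ.injective_subtype
    have hle : Submodule.map κ.subtype (ker ρ) ≤ ker ψ := by
      rintro x ⟨z, hz, rfl⟩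
      exact hz
    calc finrank K ↥(ker ρ) = finrank K ↥(Submodule.map κ.subtype (ker ρ)) :=
          (Submodule.equivMapOfInjective _ hinj _).finrank_eq
      _ ≤ finrank K ↥(ker ψ) := Submodule.finrank_mono hle
  have h2 := LinearMap.finrank_range_add_finrank_ker ρ
  have h4 : finrank K ↥(LinearMap.range ρ) ≤ finrank K ↥(ker φ) := Submodule.finrank_mono h1
  omega

variable (hσ : ∀ c : K, σ (algebraMap K F c) = algebraMap K F c)

lemma mem_ker_PsiL {a : F} {q : ℕ → F} {T : ℕ} {b : F} :
    b ∈ ker (PsiL σ hσ a q T) ↔ Psi σ a q T b = 0 := LinearMap.mem_ker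

lemma ker_linp_le_one [FiniteDimensional K F]
    (hfull : ∀ x : F, σ x = x ↔ x ∈ Set.range (algebraMap K F)) (a c : F) (ha : a ≠ 0) :
    finrank K ↥(ker (PsiL σ hσ a (linp c) 2)) ≤ 1 := by
  by_cases hbot : ker (PsiL σ hσ a (linp c) 2) = ⊥
  · rw [hbot, finrank_bot]; omega
  · obtain ⟨b, hbk, hb0⟩ := (Submodule.ne_bot_iff _).mp hbot
    have hb : σ b * a - c * b = 0 := by
      have := (mem_ker_PsiL σ hσ).mp hbk
      rwa [Psi_linp] at this
    have hc0 : c ≠ 0 := by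
      intro hc
      rw [hc, zero_mul, sub_zero] at hb
      rcases mul_eq_zero.mp hb with h | h
      · exact hb0 (σ.injective (h.trans (map_zero σ).symm))
      · exact ha h
    have hle : ker (PsiL σ hσ a (linp c) 2) ≤ Submodule.span K {b} := by
      intro b' hb'k
      by_cases hb'0 : b' = 0
      · simp [hb'0]
      · have hb' : σ b' * a - c * b' = 0 := by
          have := (mem_ker_PsiL σ hσ).mp hb'k
          rwa [Psi_linp] at this
        have hfixq : σ (b' * b⁻¹) = b' * b⁻¹ := by
          rw [map_mul, map_inv₀]
          have e1 : σ b = c * b * a⁻¹ := by field_simp; linear_combination hb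
          have e2 : σ b' = c * b' * a⁻¹ := by field_simp; linear_combination hb'
          rw [e1, e2]
          field_simp
        obtain ⟨k, hk⟩ := (hfull _).mp hfixq
        have : b' = k • b := by
          rw [Algebra.smul_def, hk]
          field_simp
        rw [this]
        exact Submodule.smul_mem _ _ (Submodule.mem_span_singleton_self b)
    calc finrank K ↥(ker (PsiL σ hσ a (linp c) 2)) ≤ finrank K ↥(Submodule.span K {b}) :=
          Submodule.finrank_mono hle
      _ = 1 := finrank_span_singleton hb0

lemma ker_linp_eq_bot (a c : F) (ha : a ≠ 0)
    (h : ¬ ∃ e : F, e ≠ 0 ∧ σ e * a * e⁻¹ = c) :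
    ker (PsiL σ hσ a (linp c) 2) = ⊥ := by
  rw [eq_bot_iff]
  intro b hbk
  by_cases hb0 : b = 0
  · simp [hb0]
  · exfalso
    have hb : σ b * a - c * b = 0 := by
      have := (mem_ker_PsiL σ hσ).mp hbk
      rwa [Psi_linp] at this
    refine h ⟨b, hb0, ?_⟩
    have hbb : σ b * a = c * b := by linear_combination hb
    rw [hbb]
    field_simp

theorem core [FiniteDimensional K F]
    (hfull : ∀ x : F, σ x = x ↔ x ∈ Set.range (algebraMap K F))
    {ℓ : ℕ} (aa : Fin ℓ → F) (ha0 : ∀ i, aa i ≠ 0)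
    (haconj : ∀ i j : Fin ℓ, i ≠ j → ¬ SConj σ (aa i) (aa j)) :
    ∀ (d : ℕ) (f : ℕ → F), SuppLT f (d + 1) → f ≠ (fun _ => 0) →
      ∑ i, finrank K ↥(ker (PsiL σ hσ (aa i) f (d + 1))) ≤ d := by
  intro d
  induction d with
  | zero =>
      intro f hsupp hne
      show ∑ i, finrank K ↥(ker (PsiL σ hσ (aa i) f 1)) ≤ 0
      have hf0 : f 0 ≠ 0 := by
        intro h0
        refine hne (funext fun j => ?_)
        rcases j with _ | j
        · exact h0
        · exact hsupp (j+1) (by omega)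
      have hk : ∀ i, ker (PsiL σ hσ (aa i) f 1) = ⊥ := by
        intro i
        rw [eq_bot_iff]
        intro b hbk
        have hb := (mem_ker_PsiL σ hσ).mp hbk
        rw [Psi, Finset.sum_range_one] at hb
        simp only [opev, Function.iterate_zero, id_eq] at hb
        have : genNorm σ (aa i) 0 = 1 := rfl
        rw [this, mul_one] at hb
        have : b = 0 := by
          rcases mul_eq_zero.mp hb with h | h
          · exact absurd h hf0
          · exact h
        simp [this]
      have hz0 : ∀ i, finrank K ↥(ker (PsiL σ hσ (aa i) f 1)) = 0 := by
        intro i; rw [hk i]; exact finrank_bot K F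
      have h0 : ∑ i, finrank K ↥(ker (PsiL σ hσ (aa i) f 1)) = 0 :=
        Finset.sum_eq_zero fun i _ => hz0 i
      omega
  | succ d ih =>
      intro f hsupp hne
      by_cases hz : ∀ i, ker (PsiL σ hσ (aa i) f (d + 1 + 1)) = ⊥
      · have hz0 : ∀ i, finrank K ↥(ker (PsiL σ hσ (aa i) f (d + 1 + 1))) = 0 := by
          intro i; rw [hz i]; exact finrank_bot K F
        have h0 : ∑ i, finrank K ↥(ker (PsiL σ hσ (aa i) f (d + 1 + 1))) = 0 :=
          Finset.sum_eq_zero fun i _ => hz0 i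
        omega
      · push_neg at hz
        obtain ⟨i0, hi0⟩ := hz
        obtain ⟨b, hbk, hb0⟩ := (Submodule.ne_bot_iff _).mp hi0
        set c := σ b * aa i0 * b⁻¹ with hc
        obtain ⟨g, r, hg, hrep⟩ := exists_div σ c (d + 1) f hsupp
        have hlin0 : Psi σ (aa i0) (linp c) 2 b = 0 := by
          rw [Psi_linp, hc]
          field_simp
          ring
        have hPb : Psi σ (aa i0) f (d + 2) b = 0 := (mem_ker_PsiL σ hσ).mp hbk
        have hsprodsupp : SuppLT (sprod σ g (linp c)) (d + 2) := by
          have := sprod_supp σ (show 1 ≤ d + 1 by omega) hg (linp_supp c)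
          simpa using this
        have hr : r = 0 := by
          have e1 : Psi σ (aa i0) f (d + 2) b
              = Psi σ (aa i0) (sprod σ g (linp c)) (d + 2) b + r * b := by
            rw [Psi_congr σ (aa i0) (fun j _ => hrep j) b, Psi_addq]
            congr 1
            exact Psi_single σ (aa i0) r (by omega) b
          have e2 : Psi σ (aa i0) (sprod σ g (linp c)) (d + 2) b = 0 := by
            rw [← Psi_trunc σ (aa i0) hsprodsupp (show d + 2 ≤ (d+1) + 2 by omega) b,
              Psi_comp σ (aa i0) hg (linp_supp c) b,
              Psi_trunc σ (aa i0) (linp_supp c) (show 2 ≤ (d+1) + 2 by omega) b,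
              hlin0, Psi_zero_right]
          rw [hPb, e2, zero_add] at e1
          rcases mul_eq_zero.mp e1.symm with h | h
          · exact h
          · exact absurd h hb0
        have hfrep : f = sprod σ g (linp c) := by
          funext e
          rw [hrep e, hr]
          simp
        have hgne : g ≠ fun _ => 0 := by
          intro hg0
          rw [hg0] at hfrep
          rw [sprod_zero_left] at hfrep
          exact hne hfrep
        have hcomp : ∀ i, PsiL σ hσ (aa i) f (d + 1 + 1)
            = (PsiL σ hσ (aa i) g (d + 1)).comp (PsiL σ hσ (aa i) (linp c) 2) := by
          intro i
          apply LinearMap.ext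
          intro x
          show Psi σ (aa i) f (d + 2) x = Psi σ (aa i) g (d+1) (Psi σ (aa i) (linp c) 2 x)
          rw [hfrep,
            ← Psi_trunc σ (aa i) hsprodsupp (show d + 2 ≤ (d+1) + 2 by omega) x,
            Psi_comp σ (aa i) hg (linp_supp c) x,
            Psi_trunc σ (aa i) (linp_supp c) (show 2 ≤ (d+1) + 2 by omega) x,
            Psi_trunc σ (aa i) hg (show d + 1 ≤ (d+1) + 2 by omega)]
        have hlinbot : ∀ i, i ≠ i0 → ker (PsiL σ hσ (aa i) (linp c) 2) = ⊥ := by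
          intro i hi
          refine ker_linp_eq_bot σ hσ (aa i) c (ha0 i) ?_
          rintro ⟨e, he0, hee⟩
          have hσe : σ e ≠ 0 := fun h => he0 (σ.injective (h.trans (map_zero σ).symm))
          have hσb : σ b ≠ 0 := fun h => hb0 (σ.injective (h.trans (map_zero σ).symm))
          have h1 : σ e * aa i = c * e := by
            field_simp at hee
            linear_combination hee
          have hbb : σ b * aa i0 = c * b := by
            rw [hc]; field_simp
          refine haconj i0 i (Ne.symm hi) ⟨e⁻¹ * b, by simp [he0, hb0], ?_⟩
          rw [map_mul, map_inv₀, mul_inv, inv_inv]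
          field_simp
          linear_combination b * h1 - e * hbb
        have hsum1 : ∑ i, finrank K ↥(ker (PsiL σ hσ (aa i) (linp c) 2))
            = finrank K ↥(ker (PsiL σ hσ (aa i0) (linp c) 2)) := by
          refine Finset.sum_eq_single_of_mem i0 (Finset.mem_univ i0) ?_
          intro i _ hi
          rw [hlinbot i hi]; exact finrank_bot K F
        have hone : finrank K ↥(ker (PsiL σ hσ (aa i0) (linp c) 2)) ≤ 1 :=
          ker_linp_le_one σ hσ hfull (aa i0) c (ha0 i0)
        have hIH := ih g hg hgne
        calc ∑ i, finrank K ↥(ker (PsiL σ hσ (aa i) f (d + 1 + 1)))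
            = ∑ i, finrank K
                ↥(ker ((PsiL σ hσ (aa i) g (d + 1)).comp (PsiL σ hσ (aa i) (linp c) 2))) := by
              refine Finset.sum_congr rfl fun i _ => ?_
              rw [hcomp i]
          _ ≤ ∑ i, (finrank K ↥(ker (PsiL σ hσ (aa i) g (d + 1)))
                + finrank K ↥(ker (PsiL σ hσ (aa i) (linp c) 2))) :=
              Finset.sum_le_sum fun i _ => finrank_ker_comp _ _
          _ = (∑ i, finrank K ↥(ker (PsiL σ hσ (aa i) g (d + 1))))
                + ∑ i, finrank K ↥(ker (PsiL σ hσ (aa i) (linp c) 2)) :=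
              Finset.sum_add_distrib
          _ ≤ d + 1 := by rw [hsum1]; omega
end E



section FHelp
variable {K F : Type} [Field K] [Field F] [Algebra K F] (σ : F ≃+* F)

/-- extend a `Fin N`-indexed coefficient vector to `ℕ` by zero. -/
def extR {N : ℕ} (w : Fin N → F) : ℕ → F := fun e => if h : e < N then w ⟨e, h⟩ else 0

lemma extR_supp {N : ℕ} (w : Fin N → F) : SuppLT (extR w) N := by
  intro e he
  exact dif_neg (by omega)

lemma extR_apply {N : ℕ} (w : Fin N → F) (j : Fin N) : extR w (j : ℕ) = w j := by
  rw [extR]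
  rw [dif_pos j.isLt]

lemma extR_add {N : ℕ} (w w' : Fin N → F) :
    extR (w + w') = fun e => extR w e + extR w' e := by
  funext e
  unfold extR
  split <;> simp

lemma extR_smul {N : ℕ} (c : F) (w : Fin N → F) :
    extR (c • w) = fun e => c * extR w e := by
  funext e
  unfold extR
  split <;> simp

lemma Psi_smulq (a : F) (cst : F) (q : ℕ → F) (T : ℕ) (b : F) :
    Psi σ a (fun e => cst * q e) T b = cst * Psi σ a q T b := by
  simp [Psi, Finset.mul_sum, mul_assoc]

lemma Psi_sumq {ι : Type*} (t : Finset ι) (qs : ι → ℕ → F) (a : F) (T : ℕ) (b : F) :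
    Psi σ a (fun e => ∑ r ∈ t, qs r e) T b = ∑ r ∈ t, Psi σ a (qs r) T b := by
  simp only [Psi, Finset.sum_mul]
  exact Finset.sum_comm

lemma codeword_Psi {ℓ : ℕ} (nn : Fin ℓ → ℕ) (aa : Fin ℓ → F)
    (β : (Σ i : Fin ℓ, Fin (nn i)) → F) {s : ℕ} (k : ℕ) (M : Matrix (Fin s) (Fin k) F)
    (r : Fin s) (p : Σ i : Fin ℓ, Fin (nn i)) :
    codeword σ nn aa β k M r p = Psi σ (aa p.1) (extR (M r)) k (β p) := by
  show (M * moore σ nn aa k β) r p = _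
  rw [Matrix.mul_apply, Psi, ← Fin.sum_univ_eq_sum_range
    (fun e => extR (M r) e * opev σ (aa p.1) (β p) e) k]
  refine Finset.sum_congr rfl fun j _ => ?_
  rw [extR_apply]
  rfl

end FHelp

set_option maxHeartbeats 1000000 in
/-- List size of lifted ILRS list decoding.
If `γ + s·δ < s·(n − k + 1)`, then for every tuple `V` of `GF(q)`-subspaces of
`F^{s+1}` the number of `M ∈ F^{s×k}` whose lifted codeword tuple `U(M)` is
`(γ, δ)`-reachable from `V` is at most `q^{m·k·(s−1)}`. -/
theorem LILRS_list_size_le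
    {K F : Type} [Field K] [Field F] [Algebra K F] [Fintype K] [Fintype F]
    (σ : F ≃+* F)
    (hfix : ∀ x : F, σ x = x ↔ x ∈ Set.range (algebraMap K F))
    {q m : ℕ} (hq : Fintype.card K = q) (hm : Module.finrank K F = m)
    {ℓ : ℕ} (hℓ : 1 ≤ ℓ) (nn : Fin ℓ → ℕ) (aa : Fin ℓ → F)
    (ha0 : ∀ i, aa i ≠ 0)
    (haconj : ∀ i j : Fin ℓ, i ≠ j → ¬ SConj σ (aa i) (aa j))
    (β : (Σ i : Fin ℓ, Fin (nn i)) → F)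
    (hβ : ∀ i, LinearIndependent K fun μ : Fin (nn i) => β ⟨i, μ⟩)
    {s : ℕ} (hs : 1 ≤ s) {k n : ℕ} (hn : n = ∑ i, nn i)
    (hk : 1 ≤ k) (hkn : k ≤ n)
    (γ δ : ℕ) (hγδ : γ + s * δ < s * (n - k + 1)) :
    ∀ V : (i : Fin ℓ) → Submodule K (Fin (s + 1) → F),
      Nat.card {M : Matrix (Fin s) (Fin k) F //
          ∃ W E : (i : Fin ℓ) → Submodule K (Fin (s + 1) → F),
            (∀ i, W i ≤ liftSp K σ nn aa β k M i) ∧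
            (∀ i, W i ⊓ E i = ⊥) ∧
            (∀ i, V i = W i ⊔ E i) ∧
            (∑ i, (Module.finrank K ↥(liftSp K σ nn aa β k M i)
                - Module.finrank K ↥(W i))) = δ ∧
            (∑ i, Module.finrank K ↥(E i)) = γ}
        ≤ q ^ (m * k * (s - 1)) := by
  classical
  haveI : FiniteDimensional K F := Module.Finite.of_finite
  have hσ : ∀ c : K, σ (algebraMap K F c) = algebraMap K F c := fun c => (hfix _).mpr ⟨c, rfl⟩
  intro V
  set Pred : Matrix (Fin s) (Fin k) F → Prop := fun M =>
    ∃ W E : (i : Fin ℓ) → Submodule K (Fin (s + 1) → F),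
      (∀ i, W i ≤ liftSp K σ nn aa β k M i) ∧
      (∀ i, W i ⊓ E i = ⊥) ∧
      (∀ i, V i = W i ⊔ E i) ∧
      (∑ i, (Module.finrank K ↥(liftSp K σ nn aa β k M i)
          - Module.finrank K ↥(W i))) = δ ∧
      (∑ i, Module.finrank K ↥(E i)) = γ with hPredDef
  rcases isEmpty_or_nonempty {M : Matrix (Fin s) (Fin k) F // Pred M} with hemp | hne
  · rw [Nat.card_of_isEmpty]
    exact Nat.zero_le _
  -- the lifted spaces have full rank
  have hUrank : ∀ (M : Matrix (Fin s) (Fin k) F) (i : Fin ℓ),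
      Module.finrank K ↥(liftSp K σ nn aa β k M i) = nn i := by
    intro M i
    have hind : LinearIndependent K (fun μ : Fin (nn i) =>
        (Fin.cons (β ⟨i, μ⟩) fun j : Fin s => codeword σ nn aa β k M j ⟨i, μ⟩
          : Fin (s + 1) → F)) := by
      apply LinearIndependent.of_comp
        (LinearMap.proj (R := K) (φ := fun _ : Fin (s + 1) => F) 0)
      have hc : (⇑(LinearMap.proj (R := K) (φ := fun _ : Fin (s + 1) => F) 0) ∘
          (fun μ : Fin (nn i) =>
            (Fin.cons (β ⟨i, μ⟩) fun j : Fin s => codeword σ nn aa β k M j ⟨i, μ⟩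
              : Fin (s + 1) → F))) = fun μ : Fin (nn i) => β ⟨i, μ⟩ := by
        funext μ
        simp
      rw [hc]
      exact hβ i
    have hspan : liftSp K σ nn aa β k M i = Submodule.span K (Set.range
        (fun μ : Fin (nn i) =>
          (Fin.cons (β ⟨i, μ⟩) fun j : Fin s => codeword σ nn aa β k M j ⟨i, μ⟩
            : Fin (s + 1) → F))) := rfl
    rw [hspan, finrank_span_eq_card hind, Fintype.card_fin]
  -- dimension count for reachability witnesses
  have hdims : ∀ (M : Matrix (Fin s) (Fin k) F)
      (W : (i : Fin ℓ) → Submodule K (Fin (s + 1) → F)),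
      (∀ i, W i ≤ liftSp K σ nn aa β k M i) →
      ((∑ i, (Module.finrank K ↥(liftSp K σ nn aa β k M i)
          - Module.finrank K ↥(W i))) = δ) →
      (∑ i, Module.finrank K ↥(W i)) + δ = n := by
    intro M W hW hsum
    have hle : ∀ i, Module.finrank K ↥(W i) ≤ nn i := by
      intro i
      rw [← hUrank M i]
      exact Submodule.finrank_mono (hW i)
    have hsum' : ∑ i, (nn i - Module.finrank K ↥(W i)) = δ := by
      rw [← hsum]
      exact Finset.sum_congr rfl fun i _ => by rw [hUrank M i]
    have hsum2 : ∑ i, (Module.finrank K ↥(W i) + (nn i - Module.finrank K ↥(W i)))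
        = ∑ i, nn i :=
      Finset.sum_congr rfl fun i _ => by have := hle i; omega
    rw [Finset.sum_add_distrib, hsum'] at hsum2
    omega
  -- total dimension of V
  have hVdim : (∑ i, Module.finrank K ↥(V i)) + δ = n + γ := by
    obtain ⟨⟨M0, hM0⟩⟩ := hne
    obtain ⟨W, E, hW, hWE, hVWE, hδs, hγs⟩ := hM0
    have h1 : ∀ i, Module.finrank K ↥(V i)
        = Module.finrank K ↥(W i) + Module.finrank K ↥(E i) := by
      intro i
      rw [hVWE i]
      have h2 := Submodule.finrank_sup_add_finrank_inf_eq (W i) (E i)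
      rw [hWE i] at h2
      have h3 : Module.finrank K ↥(⊥ : Submodule K (Fin (s + 1) → F)) = 0 := finrank_bot K _
      omega
    rw [Finset.sum_congr rfl fun i _ => h1 i, Finset.sum_add_distrib, hγs]
    have := hdims M0 W hW hδs
    omega
  -- arithmetic setup
  have hδnk : δ ≤ n - k := by
    by_contra hcon
    push_neg at hcon
    have h1 : s * (n - k + 1) ≤ s * δ := Nat.mul_le_mul_left s (by omega)
    omega
  set D : ℕ := n - δ - k + 1 with hDdef
  set d0 : ℕ := n - δ with hd0def
  have hD1 : 1 ≤ D := by omega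
  have hd0k : k ≤ d0 := by omega
  have hd01 : 1 ≤ d0 := by omega
  have hDk : D + k - 1 = d0 := by omega
  have hγD : γ < s * D := by
    have hDδ : D + δ = n - k + 1 := by omega
    have h1 : s * D + s * δ = s * (n - k + 1) := by rw [← Nat.mul_add, hDδ]
    omega
  -- interpolation
  set dV : Fin ℓ → ℕ := fun i => Module.finrank K ↥(V i) with hdVdef
  set bV : (i : Fin ℓ) → Module.Basis (Fin (dV i)) K ↥(V i) :=
    fun i => Module.finBasis K ↥(V i) with hbVdef
  set Φ : ((Fin d0 → F) × (Fin s → Fin D → F)) →ₗ[F] ((i : Fin ℓ) → Fin (dV i) → F) :=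
    { toFun := fun Qc i t =>
        Psi σ (aa i) (extR Qc.1) d0 (((bV i t : ↥(V i)) : Fin (s + 1) → F) 0)
          + ∑ r : Fin s,
              Psi σ (aa i) (extR (Qc.2 r)) D (((bV i t : ↥(V i)) : Fin (s + 1) → F) r.succ),
      map_add' := by
        intro Qc Qc'
        funext i t
        simp only [Prod.fst_add, Prod.snd_add, Pi.add_apply, extR_add, Psi_addq]
        rw [Finset.sum_add_distrib]
        ring,
      map_smul' := by
        intro cst Qc
        funext i t
        simp only [Prod.smul_fst, Prod.smul_snd, Pi.smul_apply, extR_smul, Psi_smulq,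
          smul_eq_mul, RingHom.id_apply]
        rw [← Finset.mul_sum]
        ring } with hΦdef
  have hQSrank : Module.finrank F ((Fin d0 → F) × (Fin s → Fin D → F)) = d0 + s * D := by
    rw [Module.finrank_prod, Module.finrank_pi, Module.finrank_pi_fintype]
    simp [Module.finrank_pi, Finset.sum_const, Fintype.card_fin, mul_comm]
  have hCrank : Module.finrank F ((i : Fin ℓ) → Fin (dV i) → F) = ∑ i, dV i := by
    rw [Module.finrank_pi_fintype]
    exact Finset.sum_congr rfl fun i _ => by rw [Module.finrank_pi, Fintype.card_fin]
  have hker : LinearMap.ker Φ ≠ ⊥ := by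
    intro hk
    have hinj : Function.Injective Φ := LinearMap.ker_eq_bot.mp hk
    have hle := LinearMap.finrank_le_finrank_of_injective hinj
    rw [hQSrank, hCrank] at hle
    have : ∑ i, dV i + δ = n + γ := hVdim
    omega
  obtain ⟨Q, hQmem, hQ0⟩ := (Submodule.ne_bot_iff _).mp hker
  have hQv : Φ Q = 0 := LinearMap.mem_ker.mp hQmem
  -- vanishing of the interpolation system on V
  have hvanish : ∀ i : Fin ℓ, ∀ v ∈ V i,
      Psi σ (aa i) (extR Q.1) d0 (v 0)
        + ∑ r : Fin s, Psi σ (aa i) (extR (Q.2 r)) D (v r.succ) = 0 := by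
    intro i v hv
    set ev : (Fin (s + 1) → F) →ₗ[K] F :=
      ((PsiL σ hσ (aa i) (extR Q.1) d0).comp (LinearMap.proj 0))
        + ∑ r : Fin s,
            ((PsiL σ hσ (aa i) (extR (Q.2 r)) D).comp (LinearMap.proj r.succ)) with hev
    have hevapp : ∀ w : Fin (s + 1) → F, ev w = Psi σ (aa i) (extR Q.1) d0 (w 0)
        + ∑ r : Fin s, Psi σ (aa i) (extR (Q.2 r)) D (w r.succ) := by
      intro w
      rw [hev]
      simp [LinearMap.sum_apply]
    have hbz : ev.comp (V i).subtype = 0 := by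
      apply Module.Basis.ext (bV i)
      intro t
      rw [LinearMap.comp_apply, LinearMap.zero_apply, Submodule.subtype_apply, hevapp]
      exact congrFun (congrFun hQv i) t
    have hz := LinearMap.congr_fun hbz ⟨v, hv⟩
    rw [LinearMap.comp_apply, Submodule.subtype_apply, LinearMap.zero_apply, hevapp] at hz
    exact hz
  -- every reachable message matrix kills the interpolation polynomial
  have hPM : ∀ M : Matrix (Fin s) (Fin k) F, Pred M →
      (fun e => extR Q.1 e + ∑ r : Fin s, sprod σ (extR (Q.2 r)) (extR (M r)) e)
        = (fun _ => (0 : F)) := by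
    intro M hM
    rw [hPredDef] at hM
    obtain ⟨W, E, hW, hWE, hVWE, hδs, hγs⟩ := hM
    set PM : ℕ → F :=
      fun e => extR Q.1 e + ∑ r : Fin s, sprod σ (extR (Q.2 r)) (extR (M r)) e with hPMdef
    by_contra hPMne
    have hPMsupp : SuppLT PM d0 := by
      intro e he
      show extR Q.1 e + ∑ r : Fin s, sprod σ (extR (Q.2 r)) (extR (M r)) e = 0
      rw [extR_supp Q.1 e (by omega),
        Finset.sum_eq_zero fun (r : Fin s) _ =>
          sprod_supp σ hD1 (extR_supp (Q.2 r)) (extR_supp (M r)) e (by omega), add_zero]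
    have hkerW : ∀ i : Fin ℓ, Module.finrank K ↥(W i)
        ≤ Module.finrank K ↥(LinearMap.ker (PsiL σ hσ (aa i) PM d0)) := by
      intro i
      set g : Fin (nn i) → (Fin (s + 1) → F) := fun μ =>
        Fin.cons (β ⟨i, μ⟩) fun j : Fin s => codeword σ nn aa β k M j ⟨i, μ⟩ with hg
      set φi : (Fin (nn i) → K) →ₗ[K] (Fin (s + 1) → F) :=
        { toFun := fun c => ∑ μ, c μ • g μ,
          map_add' := by
            intro x y
            simp [add_smul, Finset.sum_add_distrib],
          map_smul' := by
            intro a x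
            simp [mul_smul, Finset.smul_sum] } with hφi
      have hliftg : liftSp K σ nn aa β k M i = Submodule.span K (Set.range g) := rfl
      have hrange : Submodule.span K (Set.range g) ≤ LinearMap.range φi := by
        rw [Submodule.span_le]
        rintro x ⟨μ, rfl⟩
        refine ⟨Pi.single μ 1, ?_⟩
        simp only [hφi, LinearMap.coe_mk, AddHom.coe_mk]
        simp [Pi.single_apply]
      have hWrange : W i ≤ LinearMap.range φi := le_trans (by rw [← hliftg]; exact hW i) hrange
      set Ci : Submodule K (Fin (nn i) → K) := Submodule.comap φi (V i) with hCi
      have hWC : Module.finrank K ↥(W i) ≤ Module.finrank K ↥Ci := by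
        have h1 : Submodule.map φi (Submodule.comap φi (W i)) = W i := by
          rw [Submodule.map_comap_eq]
          exact inf_eq_right.mpr hWrange
        calc Module.finrank K ↥(W i)
            = Module.finrank K ↥(Submodule.map φi (Submodule.comap φi (W i))) := by rw [h1]
          _ ≤ Module.finrank K ↥(Submodule.comap φi (W i)) := Submodule.finrank_map_le _ _
          _ ≤ Module.finrank K ↥Ci := Submodule.finrank_mono
              (Submodule.comap_mono (by rw [hVWE i]; exact le_sup_left))
      set bmap : (Fin (nn i) → K) →ₗ[K] F :=
        { toFun := fun c => ∑ μ, c μ • β ⟨i, μ⟩,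
          map_add' := by
            intro x y
            simp [add_smul, Finset.sum_add_distrib],
          map_smul' := by
            intro a x
            simp [mul_smul, Finset.smul_sum] } with hbmap
      have hbinj : Function.Injective bmap := by
        rw [← LinearMap.ker_eq_bot, eq_bot_iff]
        intro c hc
        have hc' : (∑ μ, c μ • β ⟨i, μ⟩) = 0 := hc
        have hz := Fintype.linearIndependent_iff.mp (hβ i) c hc'
        exact (Submodule.mem_bot K).mpr (funext fun μ => hz μ)
      have hφ0 : ∀ c : Fin (nn i) → K, (φi c) 0 = bmap c := by
        intro c
        show (∑ μ, c μ • g μ) 0 = ∑ μ, c μ • β ⟨i, μ⟩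
        rw [Finset.sum_apply]
        refine Finset.sum_congr rfl fun μ _ => ?_
        rw [Pi.smul_apply, hg]
        simp
      have hφr : ∀ (c : Fin (nn i) → K) (r : Fin s),
          (φi c) r.succ = Psi σ (aa i) (extR (M r)) k (bmap c) := by
        intro c r
        have h1 : (φi c) r.succ = ∑ μ, c μ • codeword σ nn aa β k M r ⟨i, μ⟩ := by
          show (∑ μ, c μ • g μ) r.succ = _
          rw [Finset.sum_apply]
          refine Finset.sum_congr rfl fun μ _ => ?_
          rw [Pi.smul_apply, hg]
          simp
        have h2 : Psi σ (aa i) (extR (M r)) k (bmap c)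
            = ∑ μ, c μ • Psi σ (aa i) (extR (M r)) k (β ⟨i, μ⟩) := by
          show Psi σ (aa i) (extR (M r)) k (∑ μ, c μ • β ⟨i, μ⟩) = _
          have h3 : Psi σ (aa i) (extR (M r)) k (∑ μ, c μ • β ⟨i, μ⟩)
              = PsiL σ hσ (aa i) (extR (M r)) k (∑ μ, c μ • β ⟨i, μ⟩) := rfl
          rw [h3, map_sum]
          refine Finset.sum_congr rfl fun μ _ => ?_
          rw [map_smul]
          rfl
        rw [h1, h2]
        refine Finset.sum_congr rfl fun μ _ => ?_
        rw [codeword_Psi σ nn aa β k M r ⟨i, μ⟩]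
      have hPsiPM : ∀ c : Fin (nn i) → K, φi c ∈ V i → Psi σ (aa i) PM d0 (bmap c) = 0 := by
        intro c hc
        have e0 : Psi σ (aa i) PM d0 (bmap c)
            = Psi σ (aa i) (extR Q.1) d0 (bmap c)
              + ∑ r : Fin s,
                  Psi σ (aa i) (sprod σ (extR (Q.2 r)) (extR (M r))) d0 (bmap c) := by
          rw [hPMdef, Psi_addq, Psi_sumq]
        have e1 : ∀ r : Fin s,
            Psi σ (aa i) (sprod σ (extR (Q.2 r)) (extR (M r))) d0 (bmap c)
              = Psi σ (aa i) (extR (Q.2 r)) D ((φi c) r.succ) := by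
          intro r
          have hsupp2 : SuppLT (sprod σ (extR (Q.2 r)) (extR (M r))) d0 := by
            intro e he
            exact sprod_supp σ hD1 (extR_supp (Q.2 r)) (extR_supp (M r)) e (by omega)
          rw [← Psi_trunc σ (aa i) hsupp2 (show d0 ≤ D + k by omega) (bmap c),
            Psi_comp σ (aa i) (extR_supp (Q.2 r)) (extR_supp (M r)) (bmap c),
            Psi_trunc σ (aa i) (extR_supp (M r)) (show k ≤ D + k by omega) (bmap c),
            Psi_trunc σ (aa i) (extR_supp (Q.2 r)) (show D ≤ D + k by omega), hφr c r]
        have e2 : Psi σ (aa i) (extR Q.1) d0 (bmap c)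
            = Psi σ (aa i) (extR Q.1) d0 ((φi c) 0) := by rw [hφ0]
        rw [e0, e2, Finset.sum_congr rfl fun r _ => e1 r]
        exact hvanish i (φi c) hc
      have hmaple : Submodule.map bmap Ci ≤ LinearMap.ker (PsiL σ hσ (aa i) PM d0) := by
        rintro x ⟨c, hc, rfl⟩
        exact LinearMap.mem_ker.mpr (hPsiPM c hc)
      calc Module.finrank K ↥(W i) ≤ Module.finrank K ↥Ci := hWC
        _ = Module.finrank K ↥(Submodule.map bmap Ci) :=
            (Submodule.equivMapOfInjective bmap hbinj Ci).finrank_eq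
        _ ≤ Module.finrank K ↥(LinearMap.ker (PsiL σ hσ (aa i) PM d0)) :=
            Submodule.finrank_mono hmaple
    have hSW : (∑ i, Module.finrank K ↥(W i)) + δ = n := hdims M W hW hδs
    have hd0e : d0 - 1 + 1 = d0 := by omega
    have hcore := core σ hσ hfix aa ha0 haconj (d0 - 1) PM (by rw [hd0e]; exact hPMsupp) hPMne
    rw [hd0e] at hcore
    have hSb : d0 ≤ ∑ i, Module.finrank K ↥(LinearMap.ker (PsiL σ hσ (aa i) PM d0)) := by
      calc d0 = ∑ i, Module.finrank K ↥(W i) := by omega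
        _ ≤ _ := Finset.sum_le_sum fun i _ => hkerW i
    omega
  -- choose a row index whose interpolation component is nonzero
  have hex : ∃ r : Fin s, extR (Q.2 r) ≠ (fun _ => (0 : F)) := by
    by_contra hall
    push_neg at hall
    apply hQ0
    have h1 : Q.2 = 0 := by
      funext r j
      have h2 := congrFun (hall r) (j : ℕ)
      rw [extR_apply] at h2
      exact h2
    have h2 : Q.1 = 0 := by
      obtain ⟨⟨M0, hM0⟩⟩ := hne
      have h0 := hPM M0 hM0
      funext j
      have h3 := congrFun h0 (j : ℕ)
      have hsz : ∑ r : Fin s, sprod σ (extR (Q.2 r)) (extR (M0 r)) (j : ℕ) = 0 :=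
        Finset.sum_eq_zero fun r _ => by
          rw [hall r]
          exact congrFun (sprod_zero_left σ (extR (M0 r))) (j : ℕ)
      rw [hsz, add_zero, extR_apply] at h3
      exact h3
    exact Prod.ext_iff.mpr ⟨h2, h1⟩
  obtain ⟨rstar, hrstar⟩ := hex
  -- injectivity of forgetting row rstar
  have hinj : Function.Injective (fun (Mh : {M : Matrix (Fin s) (Fin k) F // Pred M}) =>
      (fun (r : {r : Fin s // r ≠ rstar}) (j : Fin k) =>
        (Mh.1 : Matrix (Fin s) (Fin k) F) r.1 j)) := by
    rintro ⟨M, hM⟩ ⟨M', hM'⟩ heq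
    simp only at heq
    have hrow : ∀ r : Fin s, r ≠ rstar → M r = M' r := by
      intro r hr
      funext j
      exact congrFun (congrFun heq ⟨r, hr⟩) j
    have hP1 := hPM M hM
    have hP2 := hPM M' hM'
    have hdiff : sprod σ (extR (Q.2 rstar))
        (fun e => extR (M rstar) e - extR (M' rstar) e) = fun _ => (0 : F) := by
      funext e
      have h1 := congrFun hP1 e
      have h2 := congrFun hP2 e
      have h3 : ∑ r : Fin s, (sprod σ (extR (Q.2 r)) (extR (M r)) e
          - sprod σ (extR (Q.2 r)) (extR (M' r)) e) = 0 := by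
        rw [Finset.sum_sub_distrib]
        linear_combination h1 - h2
      rw [Finset.sum_eq_single rstar] at h3
      · rw [congrFun (sprod_sub_right σ (extR (Q.2 rstar)) (extR (M rstar))
          (extR (M' rstar))) e]
        exact h3
      · intro r _ hr
        rw [hrow r hr, sub_self]
      · intro habs
        exact absurd (Finset.mem_univ rstar) habs
    have hdsupp : SuppLT (fun e => extR (M rstar) e - extR (M' rstar) e) k := by
      intro e he
      show extR (M rstar) e - extR (M' rstar) e = 0
      rw [extR_supp _ _ he, extR_supp _ _ he, sub_self]
    have hzero := sprod_eq_zero σ (extR_supp (Q.2 rstar)) hdsupp hrstar hdiff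
    have hMr : M rstar = M' rstar := by
      funext j
      have h4 := congrFun hzero (j : ℕ)
      rw [extR_apply, extR_apply] at h4
      exact sub_eq_zero.mp h4
    refine Subtype.ext (Matrix.ext fun r j => ?_)
    show M r j = M' r j
    by_cases hr : r = rstar
    · subst hr
      rw [hMr]
    · rw [hrow r hr]
  have hcount := Nat.card_le_card_of_injective _ hinj
  have hcF : Fintype.card F = q ^ m := by
    rw [Module.card_eq_pow_finrank (K := K) (V := F), hq, hm]
  have hcs : Fintype.card {r : Fin s // r ≠ rstar} = s - 1 := by
    simp [Fintype.card_subtype_compl]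
  have hcodcard : Nat.card ({r : Fin s // r ≠ rstar} → Fin k → F) = q ^ (m * k * (s - 1)) := by
    rw [Nat.card_eq_fintype_card, Fintype.card_fun, Fintype.card_fun, hcF, hcs,
      Fintype.card_fin, ← pow_mul, ← pow_mul]
    congr 1
    ring
  rw [hcodcard] at hcount
  exact hcount


end Stmt17
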